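/- Let K ≥ 1, let (μ_n) be a sequence of Borel probability measures on [0, K] converging weakly to a Borel probability measure μ on [0, K], and suppose that for every n the limit c(μ_n) := lim_{ε→0⁺} ∫_{(ε,K]} log λ dμ_n(λ) exists and satisfies c(μ_n) ≥ 0. Let σ_n(λ) := μ_n([0, λ]) and σ̲(λ) := liminf_{n→∞} σ_n(λ). Then ∫_0^K (σ̲(λ) − μ({0}))/λ dλ ≤ log K, and consequently limsup_{n→∞} μ_n({0}) = μ({0}). -/

import Mathlib

open MeasureTheory Filter Set
open scoped ENNReal


lemma prob_toReal_le_one (m : Measure ℝ) [IsProbabilityMeasure m] (s : Set ℝ) :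
    (m s).toReal ≤ 1 :=
  ENNReal.toReal_le_of_le_ofReal zero_le_one (by simpa using prob_le_one (μ := m) (s := s))


lemma tent_bounds (K ε : ℝ) (hε : 0 < ε) (hεK : ε ≤ K) (m : Measure ℝ)
    [IsProbabilityMeasure m] :
    (m {0}).toReal ≤ ∫ x in Icc 0 K, max 0 (1 - x / ε) ∂m ∧
      ∫ x in Icc 0 K, max 0 (1 - x / ε) ∂m ≤ (m (Icc 0 ε)).toReal := by
  have hK0 : (0:ℝ) ≤ K := le_trans hε.le hεK
  set g : ℝ → ℝ := fun x => max 0 (1 - x / ε) with hg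
  have hg_cont : Continuous g := continuous_const.max (continuous_const.sub
    (continuous_id.div_const ε))
  have hint : IntegrableOn g (Icc 0 K) m := by
    refine Measure.integrableOn_of_bounded (measure_ne_top _ _)
      hg_cont.aestronglyMeasurable (M := 1) ?_
    filter_upwards [ae_restrict_mem measurableSet_Icc] with x hx
    rw [Real.norm_eq_abs, abs_of_nonneg (le_max_left _ _)]
    exact max_le zero_le_one (by
      have : 0 ≤ x / ε := div_nonneg hx.1 hε.le
      linarith)
  constructor
  · have h1 : ∫ x in ({0} : Set ℝ), g x ∂m = (m {0}).toReal := by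
      rw [setIntegral_congr_fun (measurableSet_singleton 0)
        (g := fun _ => (1:ℝ)) ?_, setIntegral_const, smul_eq_mul, mul_one, measureReal_def]
      intro x hx
      simp only [mem_singleton_iff] at hx
      simp [hg, hx, hε.ne']
    rw [← h1]
    refine setIntegral_mono_set hint ?_ ?_
    · filter_upwards [ae_restrict_mem measurableSet_Icc] with x _
      exact le_max_left _ _
    · exact HasSubset.Subset.eventuallyLE (by
        intro x hx
        simp only [mem_singleton_iff] at hx
        subst hx; exact ⟨le_refl _, hK0⟩)
  · have hsplit : Icc 0 K = Icc 0 ε ∪ Ioc ε K := (Icc_union_Ioc_eq_Icc hε.le hεK).symm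
    have hdisj : Disjoint (Icc 0 ε) (Ioc ε K) := by
      rw [Set.disjoint_left]
      rintro x ⟨_, hx2⟩ ⟨hx3, _⟩
      exact absurd hx3 (not_lt.mpr hx2)
    rw [hsplit, setIntegral_union hdisj measurableSet_Ioc
      (hint.mono_set (by rw [hsplit]; exact subset_union_left))
      (hint.mono_set (by rw [hsplit]; exact subset_union_right))]
    have h2 : ∫ x in Ioc ε K, g x ∂m = 0 := by
      rw [setIntegral_congr_fun measurableSet_Ioc (g := fun _ => (0:ℝ)) ?_, integral_zero]
      intro x hx
      have : 1 < x / ε := (one_lt_div hε).mpr hx.1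
      simp only [hg]
      rw [max_eq_left (by linarith)]
    have h3 : ∫ x in Icc 0 ε, g x ∂m ≤ (m (Icc 0 ε)).toReal := by
      calc ∫ x in Icc 0 ε, g x ∂m ≤ ∫ _x in Icc 0 ε, (1:ℝ) ∂m := by
            refine setIntegral_mono_on
              (hint.mono_set (by rw [hsplit]; exact subset_union_left))
              (integrableOn_const (measure_ne_top _ _))
              measurableSet_Icc ?_
            intro x hx
            exact max_le zero_le_one (by
              have : 0 ≤ x / ε := div_nonneg hx.1 hε.le
              linarith)
        _ = (m (Icc 0 ε)).toReal := by rw [setIntegral_const, smul_eq_mul, mul_one, measureReal_def]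
    linarith


lemma log_integrableOn (m : Measure ℝ) [IsFiniteMeasure m] {a b : ℝ} (ha : 0 < a) :
    IntegrableOn Real.log (Ioc a b) m := by
  refine Measure.integrableOn_of_bounded (M := max |Real.log a| |Real.log b|)
    (measure_ne_top _ _) Real.measurable_log.aestronglyMeasurable ?_
  filter_upwards [ae_restrict_mem measurableSet_Ioc] with x hx
  rw [Real.norm_eq_abs]
  rcases le_or_gt 0 (Real.log x) with h | h
  · refine le_max_of_le_right ?_
    rw [abs_of_nonneg h]
    exact le_trans (Real.log_le_log (lt_of_lt_of_le ha hx.1.le) hx.2) (le_abs_self _)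
  · refine le_max_of_le_left ?_
    rw [abs_of_neg h]
    have : Real.log a ≤ Real.log x := Real.log_le_log ha hx.1.le
    exact le_trans (neg_le_neg this) (neg_le_abs _)

lemma mass_near_zero (K : ℝ) (hK : 1 ≤ K) (m : Measure ℝ) [IsProbabilityMeasure m]
    (cm : ℝ)
    (hcm : Tendsto (fun ε : ℝ => ∫ x in Ioc ε K, Real.log x ∂m)
      (nhdsWithin 0 (Ioi 0)) (nhds cm))
    (hcm0 : 0 ≤ cm) {ε : ℝ} (hε0 : 0 < ε) (hε1 : ε < 1) :
    (m (Ioc 0 ε)).toReal * (-Real.log ε) ≤ Real.log K := by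
  have hεK : ε < K := lt_of_lt_of_le hε1 hK
  have hlogK : 0 ≤ Real.log K := Real.log_nonneg hK
  have hlogε : Real.log ε < 0 := Real.log_neg hε0 hε1
  set δ : ℕ → ℝ := fun k => (ε / 2) * (1 / (k + 1)) with hδ
  have hδ0 : ∀ k, 0 < δ k := fun k => by positivity
  have hδε : ∀ k, δ k < ε := by
    intro k
    have h1 : (1:ℝ) / (k + 1) ≤ 1 := by
      rw [div_le_one (by positivity)]
      linarith [Nat.cast_nonneg (α := ℝ) k]
    calc δ k ≤ ε / 2 * 1 := by
          refine mul_le_mul_of_nonneg_left h1 (by positivity)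
      _ < ε := by linarith
  have hδtend0 : Tendsto δ atTop (nhds 0) := by
    have := tendsto_one_div_add_atTop_nhds_zero_nat.const_mul (ε / 2)
    simpa [hδ, div_eq_mul_inv] using this
  have hδtend : Tendsto δ atTop (nhdsWithin 0 (Ioi 0)) := by
    refine tendsto_nhdsWithin_of_tendsto_nhds_of_eventually_within _ hδtend0 ?_
    exact Eventually.of_forall fun k => hδ0 k
  have hI : Tendsto (fun k => ∫ x in Ioc (δ k) K, Real.log x ∂m) atTop (nhds cm) :=
    hcm.comp hδtend
  -- measure convergence
  have hUnion : (⋃ k, Ioc (δ k) ε) = Ioc 0 ε := by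
    ext x
    simp only [mem_iUnion, mem_Ioc]
    constructor
    · rintro ⟨k, hk1, hk2⟩; exact ⟨lt_trans (hδ0 k) hk1, hk2⟩
    · rintro ⟨hx1, hx2⟩
      obtain ⟨k, hk⟩ := (hδtend0.eventually (gt_mem_nhds hx1)).exists
      exact ⟨k, hk, hx2⟩
  have hmono : Monotone (fun k => Ioc (δ k) ε) := by
    intro i j hij
    refine Ioc_subset_Ioc ?_ le_rfl
    refine mul_le_mul_of_nonneg_left ?_ (by positivity)
    refine one_div_le_one_div_of_le (by positivity) ?_
    have : (i:ℝ) ≤ j := Nat.cast_le.mpr hij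
    linarith
  have hμtend : Tendsto (fun k => ((m (Ioc (δ k) ε))).toReal) atTop
      (nhds ((m (Ioc 0 ε)).toReal)) := by
    have h := tendsto_measure_iUnion_atTop (μ := m) hmono
    rw [hUnion] at h
    exact (ENNReal.tendsto_toReal (measure_ne_top _ _)).comp h
  -- per k bound
  have hbound : ∀ k, ∫ x in Ioc (δ k) K, Real.log x ∂m ≤
      (m (Ioc (δ k) ε)).toReal * Real.log ε + Real.log K := by
    intro k
    have hsplit : Ioc (δ k) K = Ioc (δ k) ε ∪ Ioc ε K :=
      (Ioc_union_Ioc_eq_Ioc (hδε k).le hεK.le).symm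
    have hdisj : Disjoint (Ioc (δ k) ε) (Ioc ε K) := by
      rw [Set.disjoint_left]
      rintro x ⟨_, hx2⟩ ⟨hx3, _⟩
      exact absurd hx3 (not_lt.mpr hx2)
    have hint1 : IntegrableOn Real.log (Ioc (δ k) ε) m :=
      (log_integrableOn m (hδ0 k)).mono_set (Ioc_subset_Ioc le_rfl hεK.le)
    have hint2 : IntegrableOn Real.log (Ioc ε K) m := log_integrableOn m hε0
    rw [hsplit, setIntegral_union hdisj measurableSet_Ioc hint1 hint2]
    have h1 : ∫ x in Ioc (δ k) ε, Real.log x ∂m ≤ (m (Ioc (δ k) ε)).toReal * Real.log ε := by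
      calc ∫ x in Ioc (δ k) ε, Real.log x ∂m ≤ ∫ _x in Ioc (δ k) ε, Real.log ε ∂m := by
            refine setIntegral_mono_on hint1
              (integrableOn_const (measure_ne_top _ _)) measurableSet_Ioc ?_
            intro x hx
            exact Real.log_le_log (lt_trans (hδ0 k) hx.1) hx.2
        _ = (m (Ioc (δ k) ε)).toReal * Real.log ε := by
            rw [setIntegral_const, smul_eq_mul, measureReal_def]
    have h2 : ∫ x in Ioc ε K, Real.log x ∂m ≤ Real.log K := by
      calc ∫ x in Ioc ε K, Real.log x ∂m ≤ ∫ _x in Ioc ε K, Real.log K ∂m := by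
            refine setIntegral_mono_on hint2
              (integrableOn_const (measure_ne_top _ _)) measurableSet_Ioc ?_
            intro x hx
            exact Real.log_le_log (lt_trans hε0 hx.1) hx.2
        _ = (m (Ioc ε K)).toReal * Real.log K := by rw [setIntegral_const, smul_eq_mul, measureReal_def]
        _ ≤ 1 * Real.log K := by
            refine mul_le_mul_of_nonneg_right ?_ hlogK
            exact ENNReal.toReal_le_of_le_ofReal zero_le_one (by simpa using prob_le_one)
        _ = Real.log K := one_mul _
    linarith
  have hRHS : Tendsto (fun k => (m (Ioc (δ k) ε)).toReal * Real.log ε + Real.log K) atTop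
      (nhds ((m (Ioc 0 ε)).toReal * Real.log ε + Real.log K)) :=
    ((hμtend.mul_const _).add_const _)
  have hfinal : cm ≤ (m (Ioc 0 ε)).toReal * Real.log ε + Real.log K :=
    le_of_tendsto_of_tendsto' hI hRHS hbound
  nlinarith [hfinal, hcm0]


lemma inv_lintegral_Ioc {lam K : ℝ} (hlam : 0 < lam) (hK : lam ≤ K) :
    ∫⁻ t in Ioc lam K, (ENNReal.ofReal t)⁻¹ =
      ENNReal.ofReal (Real.log K - Real.log lam) := by
  have hint : IntegrableOn (fun t : ℝ => 1 / t) (Ioc lam K) volume := by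
    have : ContinuousOn (fun t : ℝ => 1 / t) (Icc lam K) := by
      refine ContinuousOn.div continuousOn_const continuousOn_id ?_
      intro x hx; exact ne_of_gt (lt_of_lt_of_le hlam hx.1)
    exact (this.integrableOn_Icc).mono_set Ioc_subset_Icc_self
  have h1 : ∫⁻ t in Ioc lam K, (ENNReal.ofReal t)⁻¹ =
      ∫⁻ t in Ioc lam K, ENNReal.ofReal (1 / t) := by
    refine setLIntegral_congr_fun measurableSet_Ioc ?_
    intro t ht
    beta_reduce
    rw [one_div, ENNReal.ofReal_inv_of_pos (lt_of_lt_of_le hlam ht.1.le)]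
  rw [h1, ← ofReal_integral_eq_lintegral_ofReal hint ?_]
  · congr 1
    rw [← intervalIntegral.integral_of_le hK, integral_one_div, Real.log_div
      (by linarith) (by linarith)]
    intro h
    rw [Set.mem_uIcc] at h
    rcases h with ⟨h1, _⟩ | ⟨_, h2⟩ <;> linarith
  · filter_upwards [ae_restrict_mem measurableSet_Ioc] with t ht
    have : 0 < t := lt_of_lt_of_le hlam ht.1.le
    positivity


lemma tonelli_key (K : ℝ) (m : Measure ℝ) [IsProbabilityMeasure m] {ε : ℝ}
    (hε : 0 < ε) (hεK : ε ≤ K) :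
    ∫⁻ t in Ioc 0 K, m (Ioo ε t) * (ENNReal.ofReal t)⁻¹ =
      ∫⁻ lam in Ioc ε K, ENNReal.ofReal (Real.log K - Real.log lam) ∂m := by
  set f : ℝ → ℝ → ℝ≥0∞ := fun t lam => if lam < t then (ENNReal.ofReal t)⁻¹ else 0 with hf
  have step1 : ∫⁻ t in Ioc 0 K, m (Ioo ε t) * (ENNReal.ofReal t)⁻¹ =
      ∫⁻ t in Ioc 0 K, ∫⁻ lam in Ioc ε K, f t lam ∂m := by
    refine setLIntegral_congr_fun measurableSet_Ioc ?_
    intro t ht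
    have : ∫⁻ lam in Ioc ε K, f t lam ∂m =
        ∫⁻ lam in Ioc ε K, (Iio t).indicator (fun _ => (ENNReal.ofReal t)⁻¹) lam ∂m := by
      refine setLIntegral_congr_fun measurableSet_Ioc ?_
      intro lam _
      simp [hf, Set.indicator_apply]
    have hseteq : Iio t ∩ Ioc ε K = Ioo ε t := by
      ext x
      simp only [mem_inter_iff, mem_Iio, mem_Ioc, mem_Ioo]
      constructor
      · rintro ⟨h1, h2, _⟩; exact ⟨h2, h1⟩
      · rintro ⟨h1, h2⟩; exact ⟨h2, h1, le_trans h2.le ht.2⟩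
    beta_reduce
    rw [this, lintegral_indicator measurableSet_Iio, Measure.restrict_restrict measurableSet_Iio,
      setLIntegral_const, hseteq, mul_comm]
  have hmeas : AEMeasurable (Function.uncurry f)
      ((volume.restrict (Ioc 0 K)).prod (m.restrict (Ioc ε K))) := by
    refine Measurable.aemeasurable ?_
    have hset : MeasurableSet {p : ℝ × ℝ | p.2 < p.1} := measurableSet_lt measurable_snd measurable_fst
    exact Measurable.ite hset ((ENNReal.measurable_ofReal.comp measurable_fst).inv) measurable_const
  have step2 : ∫⁻ t in Ioc 0 K, ∫⁻ lam in Ioc ε K, f t lam ∂m =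
      ∫⁻ lam in Ioc ε K, ∫⁻ t in Ioc 0 K, f t lam ∂(volume) ∂m :=
    lintegral_lintegral_swap hmeas
  have step3 : ∫⁻ lam in Ioc ε K, ∫⁻ t in Ioc 0 K, f t lam ∂(volume) ∂m =
      ∫⁻ lam in Ioc ε K, ENNReal.ofReal (Real.log K - Real.log lam) ∂m := by
    refine setLIntegral_congr_fun measurableSet_Ioc ?_
    intro lam hlam
    have hlam0 : 0 < lam := lt_trans hε hlam.1
    have : ∫⁻ t in Ioc 0 K, f t lam ∂(volume) =
        ∫⁻ t in Ioc 0 K, (Ioi lam).indicator (fun t => (ENNReal.ofReal t)⁻¹) t ∂(volume) := by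
      refine setLIntegral_congr_fun measurableSet_Ioc ?_
      intro t _
      simp [hf, Set.indicator_apply]
    beta_reduce
    rw [this, lintegral_indicator measurableSet_Ioi, Measure.restrict_restrict measurableSet_Ioi]
    have hset : Ioi lam ∩ Ioc 0 K = Ioc lam K := by
      ext x
      simp only [mem_inter_iff, mem_Ioi, mem_Ioc]
      constructor
      · rintro ⟨h1, _, h3⟩; exact ⟨h1, h3⟩
      · rintro ⟨h1, h2⟩; exact ⟨h1, lt_trans hlam0 h1, h2⟩
    rw [hset, inv_lintegral_Ioc hlam0 hlam.2]
  rw [step1, step2, step3]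


lemma layer_bound (K : ℝ) (hK : 1 ≤ K) (m : Measure ℝ) [IsProbabilityMeasure m]
    (cm : ℝ)
    (hcm : Tendsto (fun ε : ℝ => ∫ x in Ioc ε K, Real.log x ∂m)
      (nhdsWithin 0 (Ioi 0)) (nhds cm))
    (hcm0 : 0 ≤ cm) :
    ∫⁻ t in Ioc 0 K, m (Ioo 0 t) * (ENNReal.ofReal t)⁻¹ ≤ ENNReal.ofReal (Real.log K) := by
  have hlogK : 0 ≤ Real.log K := Real.log_nonneg hK
  set δ : ℕ → ℝ := fun k => 1 / (k + 1) with hδ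
  have hδ0 : ∀ k, 0 < δ k := fun k => by positivity
  have hδK : ∀ k, δ k ≤ K := by
    intro k
    refine le_trans ?_ hK
    rw [hδ, div_le_one (by positivity)]
    linarith [Nat.cast_nonneg (α := ℝ) k]
  have hδanti : Antitone δ := by
    intro i j hij
    refine one_div_le_one_div_of_le (by positivity) ?_
    have : (i:ℝ) ≤ j := Nat.cast_le.mpr hij
    linarith
  have hδtend0 : Tendsto δ atTop (nhds 0) := tendsto_one_div_add_atTop_nhds_zero_nat
  have hδtend : Tendsto δ atTop (nhdsWithin 0 (Ioi 0)) :=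
    tendsto_nhdsWithin_of_tendsto_nhds_of_eventually_within _ hδtend0
      (Eventually.of_forall fun k => hδ0 k)
  set F : ℕ → ℝ → ℝ≥0∞ := fun k t => m (Ioo (δ k) t) * (ENNReal.ofReal t)⁻¹ with hF
  have hmono_meas : ∀ a : ℝ, Measurable (fun t => m (Ioo a t)) := by
    intro a
    exact Monotone.measurable (fun s t hst => measure_mono (Ioo_subset_Ioo le_rfl hst))
  have hinv_meas : Measurable (fun t : ℝ => (ENNReal.ofReal t)⁻¹) :=
    ENNReal.measurable_ofReal.inv
  have hFmeas : ∀ k, Measurable (F k) := fun k => (hmono_meas (δ k)).mul hinv_meas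
  have hFmono : Monotone F := by
    intro i j hij t
    exact mul_le_mul_left (measure_mono (Ioo_subset_Ioo (hδanti hij) le_rfl)) _
  have hFsup : ∀ t : ℝ, (⨆ k, F k t) = m (Ioo 0 t) * (ENNReal.ofReal t)⁻¹ := by
    intro t
    rw [hF]
    simp only
    rw [← ENNReal.iSup_mul]
    congr 1
    have hU : (⋃ k, Ioo (δ k) t) = Ioo 0 t := by
      ext x
      simp only [mem_iUnion, mem_Ioo]
      constructor
      · rintro ⟨k, h1, h2⟩; exact ⟨lt_trans (hδ0 k) h1, h2⟩
      · rintro ⟨h1, h2⟩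
        obtain ⟨k, hk⟩ := (hδtend0.eventually (gt_mem_nhds h1)).exists
        exact ⟨k, hk, h2⟩
    rw [← hU]
    exact (Directed.measure_iUnion (μ := m) (Monotone.directed_le (fun i j hij =>
      Ioo_subset_Ioo (hδanti hij) le_rfl))).symm
  set G : ℕ → ℝ≥0∞ := fun k => ∫⁻ t in Ioc 0 K, F k t with hG
  have hGmono : Monotone G := fun i j hij => lintegral_mono (hFmono hij)
  have hmain : ∫⁻ t in Ioc 0 K, m (Ioo 0 t) * (ENNReal.ofReal t)⁻¹ = ⨆ k, G k := by
    rw [← lintegral_iSup hFmeas hFmono]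
    refine lintegral_congr fun t => (hFsup t).symm
  have hGB : ∀ k, G k ≤ ENNReal.ofReal
      (Real.log K - ∫ x in Ioc (δ k) K, Real.log x ∂m) := by
    intro k
    have hintlog : IntegrableOn Real.log (Ioc (δ k) K) m := log_integrableOn m (hδ0 k)
    have hintc : IntegrableOn (fun _ : ℝ => Real.log K) (Ioc (δ k) K) m :=
      integrableOn_const (measure_ne_top _ _)
    have hnn : 0 ≤ᵐ[m.restrict (Ioc (δ k) K)] fun lam => Real.log K - Real.log lam := by
      filter_upwards [ae_restrict_mem measurableSet_Ioc] with lam hlam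
      have : Real.log lam ≤ Real.log K :=
        Real.log_le_log (lt_of_lt_of_le (hδ0 k) hlam.1.le) hlam.2
      simp only [Pi.zero_apply]
      linarith
    have heq : G k = ENNReal.ofReal (∫ lam in Ioc (δ k) K,
        (Real.log K - Real.log lam) ∂m) := by
      rw [hG]
      simp only
      rw [tonelli_key K m (hδ0 k) (hδK k),
        ← ofReal_integral_eq_lintegral_ofReal (f := fun lam => Real.log K - Real.log lam)
          (hintc.sub hintlog) hnn]
    rw [heq]
    refine ENNReal.ofReal_le_ofReal ?_
    rw [integral_sub hintc hintlog, setIntegral_const, smul_eq_mul, measureReal_def]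
    have h1 : (m (Ioc (δ k) K)).toReal ≤ 1 :=
      ENNReal.toReal_le_of_le_ofReal zero_le_one (by simpa using prob_le_one)
    nlinarith
  have hGtend : Tendsto G atTop (nhds (⨆ k, G k)) := tendsto_atTop_iSup hGmono
  have hItend : Tendsto (fun k => ∫ x in Ioc (δ k) K, Real.log x ∂m) atTop (nhds cm) :=
    hcm.comp hδtend
  have hBtend : Tendsto (fun k => ENNReal.ofReal
      (Real.log K - ∫ x in Ioc (δ k) K, Real.log x ∂m)) atTop
      (nhds (ENNReal.ofReal (Real.log K - cm))) :=
    (ENNReal.continuous_ofReal.tendsto _).comp (tendsto_const_nhds.sub hItend)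
  have hfin : (⨆ k, G k) ≤ ENNReal.ofReal (Real.log K - cm) :=
    le_of_tendsto_of_tendsto' hGtend hBtend hGB
  rw [hmain]
  exact le_trans hfin (ENNReal.ofReal_le_ofReal (by linarith))

/-- If probability measures `μ n` on `[0, K]` (with `K ≥ 1`) converge weakly to `ν`, and
for every `n` the limit `c n = lim_{ε→0⁺} ∫_{(ε,K]} log λ dμ_n(λ)` exists and is
nonnegative, then, with `σlow` the pointwise liminf of the distribution functions of the
`μ n`, one has `∫_0^K (σlow(λ) - ν({0}))/λ dλ ≤ log K`, and consequently
`limsup_n μ_n({0}) = ν({0})`. -/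
theorem liminf_distribution_integral_bound_and_limsup_atom
    (K : ℝ) (hK : 1 ≤ K)
    (μ : ℕ → Measure ℝ) (ν : Measure ℝ)
    (hμprob : ∀ n, IsProbabilityMeasure (μ n))
    (hνprob : IsProbabilityMeasure ν)
    (hμsupp : ∀ n, (μ n) (Set.Icc 0 K)ᶜ = 0)
    (hνsupp : ν (Set.Icc 0 K)ᶜ = 0)
    (hweak : ∀ f : ℝ → ℝ, ContinuousOn f (Set.Icc 0 K) →
      Filter.Tendsto (fun n => ∫ x in Set.Icc 0 K, f x ∂(μ n)) Filter.atTop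
        (nhds (∫ x in Set.Icc 0 K, f x ∂ν)))
    (c : ℕ → ℝ)
    (hc : ∀ n, Filter.Tendsto (fun ε : ℝ => ∫ x in Set.Ioc ε K, Real.log x ∂(μ n))
      (nhdsWithin 0 (Set.Ioi 0)) (nhds (c n)))
    (hc0 : ∀ n, 0 ≤ c n)
    (σlow : ℝ → ℝ)
    (hlow : ∀ lam, σlow lam =
      Filter.liminf (fun n => ((μ n) (Set.Icc 0 lam)).toReal) Filter.atTop) :
    (∫⁻ lam in Set.Ioc 0 K, ENNReal.ofReal ((σlow lam - (ν {0}).toReal) / lam) ≤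
      ENNReal.ofReal (Real.log K)) ∧
    Filter.limsup (fun n => ((μ n) {0}).toReal) Filter.atTop = (ν {0}).toReal := by
  haveI := hνprob
  have hK0 : (0:ℝ) < K := lt_of_lt_of_le one_pos hK
  set ν0 : ℝ := (ν {0}).toReal with hν0def
  set b : ℕ → ℝ := fun n => ((μ n) {0}).toReal with hbdef
  have hb0 : ∀ n, 0 ≤ b n := fun n => ENNReal.toReal_nonneg
  have hb1 : ∀ n, b n ≤ 1 := fun n => by
    haveI := hμprob n; exact prob_toReal_le_one (μ n) _
  have bdd_ge : ∀ (x : ℕ → ℝ), (∀ n, 0 ≤ x n) → IsBoundedUnder (· ≥ ·) atTop x :=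
    fun x hx => isBoundedUnder_of ⟨0, hx⟩
  have bdd_le : ∀ (x : ℕ → ℝ) (Cb : ℝ), (∀ n, x n ≤ Cb) → IsBoundedUnder (· ≤ ·) atTop x :=
    fun x Cb hx => isBoundedUnder_of ⟨Cb, hx⟩
  have gcont : ∀ ε : ℝ, ContinuousOn (fun x : ℝ => max 0 (1 - x / ε)) (Icc 0 K) :=
    fun ε => (continuous_const.max (continuous_const.sub
      (continuous_id.div_const ε))).continuousOn
  -- (1) upper bound for limsup of atoms
  have hub_eps : ∀ ε : ℝ, 0 < ε → ε ≤ K → limsup b atTop ≤ (ν (Icc 0 ε)).toReal := by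
    intro ε hε hεK
    have h1 : ∀ n, b n ≤ ∫ x in Icc 0 K, max 0 (1 - x / ε) ∂(μ n) := by
      intro n; haveI := hμprob n
      exact (tent_bounds K ε hε hεK (μ n)).1
    have hlim := hweak (fun x => max 0 (1 - x / ε)) (gcont ε)
    have h2 : ∫ x in Icc 0 K, max 0 (1 - x / ε) ∂ν ≤ (ν (Icc 0 ε)).toReal :=
      (tent_bounds K ε hε hεK ν).2
    calc limsup b atTop
        ≤ limsup (fun n => ∫ x in Icc 0 K, max 0 (1 - x / ε) ∂(μ n)) atTop :=
          limsup_le_limsup (Eventually.of_forall h1)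
            ((bdd_ge b hb0).isCoboundedUnder_le) hlim.isBoundedUnder_le
      _ = ∫ x in Icc 0 K, max 0 (1 - x / ε) ∂ν := hlim.limsup_eq
      _ ≤ (ν (Icc 0 ε)).toReal := h2
  have hub : limsup b atTop ≤ ν0 := by
    have hIcc : ∀ j : ℕ, limsup b atTop ≤ (ν (Icc 0 (1 / ((j:ℝ) + 1)))).toReal := by
      intro j
      refine hub_eps _ (by positivity) (le_trans ?_ hK)
      rw [div_le_one (by positivity)]
      linarith [Nat.cast_nonneg (α := ℝ) j]
    have hInter : (⋂ j : ℕ, Icc (0:ℝ) (1 / ((j:ℝ) + 1))) = {0} := by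
      ext x
      simp only [mem_iInter, mem_Icc, mem_singleton_iff]
      constructor
      · intro h
        have hx0 : 0 ≤ x := (h 0).1
        rcases eq_or_lt_of_le hx0 with h'|h'
        · exact h'.symm
        · obtain ⟨j, hj⟩ := exists_nat_one_div_lt h'
          have := (h j).2
          have hj' : 1 / ((j:ℝ) + 1) < x := hj
          linarith
      · rintro rfl
        exact fun j => ⟨le_rfl, by positivity⟩
    have htend : Tendsto (fun j : ℕ => (ν (Icc 0 (1 / ((j:ℝ) + 1)))).toReal) atTop
        (nhds ν0) := by
      have h := tendsto_measure_iInter_atTop (μ := ν)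
        (s := fun j : ℕ => Icc (0:ℝ) (1 / ((j:ℝ) + 1)))
        (fun j => measurableSet_Icc.nullMeasurableSet)
        (fun i j hij => Icc_subset_Icc le_rfl (by
          refine one_div_le_one_div_of_le (by positivity) ?_
          have : (i:ℝ) ≤ j := Nat.cast_le.mpr hij
          linarith)) ⟨0, measure_ne_top _ _⟩
      rw [hInter] at h
      exact (ENNReal.tendsto_toReal (measure_ne_top _ _)).comp h
    exact ge_of_tendsto htend (Eventually.of_forall hIcc)
  -- (2) lower bound for limsup of atoms
  have hlb : ν0 ≤ limsup b atTop := by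
    have key : ∀ j : ℕ, ν0 - Real.log K / (j + 1) ≤ limsup b atTop := by
      intro j
      set ε : ℝ := Real.exp (-((j:ℝ) + 1)) with hεdef
      have hε0 : 0 < ε := Real.exp_pos _
      have hε1 : ε < 1 := Real.exp_lt_one_iff.mpr (by
        have : (0:ℝ) ≤ j := Nat.cast_nonneg j
        linarith)
      have hεK : ε ≤ K := le_trans hε1.le hK
      have hlogε : -Real.log ε = (j:ℝ) + 1 := by
        rw [hεdef, Real.log_exp]; ring
      have hmass : ∀ n, ((μ n) (Ioc 0 ε)).toReal ≤ Real.log K / ((j:ℝ) + 1) := by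
        intro n; haveI := hμprob n
        have h := mass_near_zero K hK (μ n) (c n) (hc n) (hc0 n) hε0 hε1
        rw [hlogε] at h
        rw [le_div_iff₀ (by positivity)]
        exact h
      have h1 : ∀ n, (∫ x in Icc 0 K, max 0 (1 - x / ε) ∂(μ n)) -
          Real.log K / ((j:ℝ) + 1) ≤ b n := by
        intro n; haveI := hμprob n
        have hsplit : (μ n) (Icc 0 ε) = (μ n) {0} + (μ n) (Ioc 0 ε) := by
          rw [← measure_union (by
            rw [Set.disjoint_left]
            rintro x hx hx2
            simp only [mem_singleton_iff] at hx
            exact absurd hx2.1 (by rw [hx]; exact lt_irrefl 0)) measurableSet_Ioc]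
          congr 1
          ext x
          simp only [mem_Icc, mem_union, mem_singleton_iff, mem_Ioc]
          constructor
          · rintro ⟨h1, h2⟩
            rcases eq_or_lt_of_le h1 with h'|h'
            · exact Or.inl h'.symm
            · exact Or.inr ⟨h', h2⟩
          · rintro (rfl | ⟨h1, h2⟩)
            · exact ⟨le_rfl, hε0.le⟩
            · exact ⟨h1.le, h2⟩
        have htoReal : ((μ n) (Icc 0 ε)).toReal = b n + ((μ n) (Ioc 0 ε)).toReal := by
          rw [hsplit, ENNReal.toReal_add (measure_ne_top _ _) (measure_ne_top _ _)]
        have h2 := (tent_bounds K ε hε0 hεK (μ n)).2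
        have h3 := hmass n
        linarith
      have hlim := hweak (fun x => max 0 (1 - x / ε)) (gcont ε)
      have hlim2 : Tendsto (fun n => (∫ x in Icc 0 K, max 0 (1 - x / ε) ∂(μ n)) -
          Real.log K / ((j:ℝ) + 1)) atTop
          (nhds ((∫ x in Icc 0 K, max 0 (1 - x / ε) ∂ν) - Real.log K / ((j:ℝ) + 1))) :=
        hlim.sub_const _
      have h4 := (tent_bounds K ε hε0 hεK ν).1
      calc ν0 - Real.log K / ((j:ℝ) + 1)
          ≤ (∫ x in Icc 0 K, max 0 (1 - x / ε) ∂ν) - Real.log K / ((j:ℝ) + 1) := by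
            linarith
        _ = limsup (fun n => (∫ x in Icc 0 K, max 0 (1 - x / ε) ∂(μ n)) -
              Real.log K / ((j:ℝ) + 1)) atTop := hlim2.limsup_eq.symm
        _ ≤ limsup b atTop :=
            limsup_le_limsup (Eventually.of_forall h1)
              hlim2.isBoundedUnder_ge.isCoboundedUnder_le (bdd_le b 1 hb1)
    have htend : Tendsto (fun j : ℕ => ν0 - Real.log K / ((j:ℝ) + 1)) atTop (nhds ν0) := by
      have h := tendsto_one_div_add_atTop_nhds_zero_nat.const_mul (Real.log K)
      have h2 : Tendsto (fun j : ℕ => Real.log K / ((j:ℝ) + 1)) atTop (nhds 0) := by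
        simpa [div_eq_mul_inv, mul_comm] using h
      simpa using tendsto_const_nhds.sub h2
    exact le_of_tendsto htend (Eventually.of_forall key)
  have part2 : limsup b atTop = ν0 := le_antisymm hub hlb
  -- (3) main integral bound
  have hmono_meas : ∀ n, Measurable (fun t : ℝ => (μ n) (Ioo 0 t) * (ENNReal.ofReal t)⁻¹) := by
    intro n
    exact (Monotone.measurable (fun s t hst =>
      measure_mono (Ioo_subset_Ioo le_rfl hst))).mul ENNReal.measurable_ofReal.inv
  have hFatou : ∫⁻ t in Ioc 0 K,
      liminf (fun n => (μ n) (Ioo 0 t) * (ENNReal.ofReal t)⁻¹) atTop ≤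
      ENNReal.ofReal (Real.log K) := by
    refine le_trans (lintegral_liminf_le hmono_meas) ?_
    have hbound : ∀ n, ∫⁻ t in Ioc 0 K, (μ n) (Ioo 0 t) * (ENNReal.ofReal t)⁻¹ ≤
        ENNReal.ofReal (Real.log K) := by
      intro n; haveI := hμprob n
      exact layer_bound K hK (μ n) (c n) (hc n) (hc0 n)
    exact le_trans (liminf_le_liminf (Eventually.of_forall hbound)) (by rw [liminf_const])
  have hσmono : Monotone σlow := by
    intro s t hst
    rw [hlow s, hlow t]
    have h1 : ∀ n, ((μ n) (Icc 0 s)).toReal ≤ ((μ n) (Icc 0 t)).toReal := fun n =>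
      ENNReal.toReal_mono (measure_ne_top _ _) (measure_mono (Icc_subset_Icc le_rfl hst))
    have h3 : ∀ n, ((μ n) (Icc 0 t)).toReal ≤ 1 := by
      intro n; haveI := hμprob n; exact prob_toReal_le_one (μ n) _
    exact liminf_le_liminf (Eventually.of_forall h1)
      (bdd_ge _ (fun n => ENNReal.toReal_nonneg)) ((bdd_le _ 1 h3).isCoboundedUnder_ge)
  have hcont_ae : ∀ᵐ t : ℝ, ContinuousAt σlow t := by
    rw [ae_iff]
    exact (hσmono.countable_not_continuousAt).measure_zero _
  have hae : ∀ᵐ t ∂(volume.restrict (Ioc 0 K)),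
      ENNReal.ofReal ((σlow t - ν0) / t) ≤
        liminf (fun n => (μ n) (Ioo 0 t) * (ENNReal.ofReal t)⁻¹) atTop := by
    filter_upwards [ae_restrict_mem measurableSet_Ioc, ae_restrict_of_ae hcont_ae]
      with t ht hcont
    have htpos : 0 < t := ht.1
    set A : ℝ≥0∞ := liminf (fun n => (μ n) (Ioo 0 t)) atTop with hA
    have hA1 : A ≤ 1 := by
      have h1 : ∀ n, (μ n) (Ioo 0 t) ≤ 1 := fun n => by
        haveI := hμprob n; exact prob_le_one
      refine le_trans (liminf_le_liminf (Eventually.of_forall h1)) ?_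
      rw [liminf_const]
    have hAtop : A ≠ ∞ := (lt_of_le_of_lt hA1 ENNReal.one_lt_top).ne
    have hAtoReal : liminf (fun n => ((μ n) (Ioo 0 t)).toReal) atTop = A.toReal :=
      ENNReal.liminf_toReal_eq ENNReal.one_ne_top
        (Eventually.of_forall fun n => by haveI := hμprob n; exact prob_le_one)
    have hstep : σlow t ≤ ν0 + A.toReal := by
      have hs : ∀ s ∈ Ioo (0:ℝ) t, σlow s ≤ ν0 + A.toReal := by
        intro s hsm
        rw [hlow s]
        have hpt : ∀ n, ((μ n) (Icc 0 s)).toReal ≤ b n + ((μ n) (Ioo 0 t)).toReal := by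
          intro n; haveI := hμprob n
          have hsub : Icc 0 s ⊆ {0} ∪ Ioo 0 t := by
            intro x hx
            rcases eq_or_lt_of_le hx.1 with h'|h'
            · exact Or.inl (by simp [← h'])
            · exact Or.inr ⟨h', lt_of_le_of_lt hx.2 hsm.2⟩
          calc ((μ n) (Icc 0 s)).toReal ≤ ((μ n) ({0} ∪ Ioo 0 t)).toReal :=
                ENNReal.toReal_mono (measure_ne_top _ _) (measure_mono hsub)
            _ ≤ (((μ n) {0}) + (μ n) (Ioo 0 t)).toReal :=
                ENNReal.toReal_mono (by
                  exact ENNReal.add_ne_top.mpr ⟨measure_ne_top _ _, measure_ne_top _ _⟩)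
                  (measure_union_le _ _)
            _ = b n + ((μ n) (Ioo 0 t)).toReal :=
                ENNReal.toReal_add (measure_ne_top _ _) (measure_ne_top _ _)
        have hbdd_a : ∀ n, 0 ≤ ((μ n) (Ioo 0 t)).toReal := fun n => ENNReal.toReal_nonneg
        have hbdd_a1 : ∀ n, ((μ n) (Ioo 0 t)).toReal ≤ 1 := fun n => by
          haveI := hμprob n; exact prob_toReal_le_one (μ n) _
        calc liminf (fun n => ((μ n) (Icc 0 s)).toReal) atTop
            ≤ liminf (fun n => b n + ((μ n) (Ioo 0 t)).toReal) atTop :=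
              liminf_le_liminf (Eventually.of_forall hpt)
                (bdd_ge _ (fun n => ENNReal.toReal_nonneg))
                ((bdd_le _ 2 (fun n => by
                  have := hb1 n; have := hbdd_a1 n; linarith)).isCoboundedUnder_ge)
          _ ≤ limsup b atTop + liminf (fun n => ((μ n) (Ioo 0 t)).toReal) atTop :=
              liminf_add_le (bdd_ge b hb0) (bdd_le b 1 hb1)
                (bdd_ge _ hbdd_a) ((bdd_le _ 1 hbdd_a1).isCoboundedUnder_ge)
          _ ≤ ν0 + A.toReal := by
              rw [hAtoReal]
              exact add_le_add hub le_rfl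
      haveI : (nhdsWithin t (Ioo 0 t)).NeBot := right_nhdsWithin_Ioo_neBot htpos
      have htend : Tendsto σlow (nhdsWithin t (Ioo 0 t)) (nhds (σlow t)) :=
        hcont.tendsto.mono_left nhdsWithin_le_nhds
      exact le_of_tendsto htend (eventually_mem_nhdsWithin.mono (fun s hsm => hs s hsm))
    have h1 : ENNReal.ofReal (σlow t - ν0) ≤ A := by
      calc ENNReal.ofReal (σlow t - ν0) ≤ ENNReal.ofReal A.toReal :=
            ENNReal.ofReal_le_ofReal (by linarith)
        _ = A := ENNReal.ofReal_toReal hAtop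
    have h2 : ENNReal.ofReal ((σlow t - ν0) / t) =
        ENNReal.ofReal (σlow t - ν0) * (ENNReal.ofReal t)⁻¹ := by
      rw [div_eq_mul_inv, ENNReal.ofReal_mul' (inv_nonneg.mpr htpos.le),
        ENNReal.ofReal_inv_of_pos htpos]
    rw [h2]
    calc ENNReal.ofReal (σlow t - ν0) * (ENNReal.ofReal t)⁻¹
        ≤ A * (ENNReal.ofReal t)⁻¹ := mul_le_mul_left h1 _
      _ ≤ liminf (fun n => (μ n) (Ioo 0 t) * (ENNReal.ofReal t)⁻¹) atTop := by
          have h3 : A * (ENNReal.ofReal t)⁻¹ =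
              liminf (fun n => (μ n) (Ioo 0 t)) atTop *
              liminf (fun _ : ℕ => (ENNReal.ofReal t)⁻¹) atTop := by
            rw [liminf_const]
          rw [h3]
          exact ENNReal.le_liminf_mul
  exact ⟨le_trans (lintegral_mono_ae hae) hFatou, part2⟩
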